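/- arXiv:2206.05321 — 4 statements merged into one kernel-verified Lean document; each statement's English description precedes it below -/
import Mathlib

section
/- Let p be a prime number, Z_(p) the localization of the integers at the prime p, let r ≥ 1, and let ℓ_1, …, ℓ_r be prime numbers. Let R = Z_(p)[x_1, …, x_r] and let I ⊆ R be the ideal generated by the element x_1·x_2⋯x_r together with the elements x_i·(x_i + 1 − ℓ_i) for i = 1, …, r. Then the quotient R/I is a free Z_(p)-module of rank 2^r − 1. -/
set_option linter.unusedSectionVars false
set_option maxHeartbeats 1000000

open MvPolynomial

/-- The span of `p` in `ℤ` is a prime ideal when `p` is prime. -/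
instance intSpanPrime (p : ℕ) [hp : Fact p.Prime] : (Ideal.span {(p : ℤ)}).IsPrime := by
  rw [Ideal.span_singleton_prime (by exact_mod_cast hp.out.ne_zero)]
  exact Nat.prime_iff_prime_int.mp hp.out

/-- `Z_(p)`: the localization of `ℤ` at the prime ideal `(p)`. -/
abbrev Zp (p : ℕ) [Fact p.Prime] : Type :=
  Localization.AtPrime (Ideal.span {(p : ℤ)})

variable {A : Type*} [CommRing A] {r : ℕ} (a : Fin r → A)

noncomputable def Igen : Ideal (MvPolynomial (Fin r) A) :=
  Ideal.span (insert (∏ i : Fin r, X i)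
    (Set.range fun i : Fin r => X i * (X i - C (a i))))

local notation "R" => MvPolynomial (Fin r) A
local notation "π" => Ideal.Quotient.mk (Igen a)

lemma mem1 : (∏ i : Fin r, X i : R) ∈ Igen a :=
  Ideal.subset_span (Set.mem_insert _ _)

lemma mem2 (i : Fin r) : (X i * (X i - C (a i)) : R) ∈ Igen a :=
  Ideal.subset_span (Set.mem_insert_iff.mpr (Or.inr ⟨i, rfl⟩))

lemma smul_mk (c : A) (f : MvPolynomial (Fin r) A) : c • (π f) = π (C c * f) := by
  rw [← smul_eq_C_mul]
  exact (Submodule.Quotient.mk_smul (Igen a) c f).symm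

noncomputable def bfun : {S : Finset (Fin r) // S ≠ Finset.univ} → MvPolynomial (Fin r) A ⧸ Igen a :=
  fun S => π (∏ i ∈ S.1, X i)

lemma pi_prod_univ : π (∏ i : Fin r, X i) = 0 :=
  Ideal.Quotient.eq_zero_iff_mem.mpr (mem1 a)

lemma pi_mul_prod (i : Fin r) (S : Finset (Fin r)) (hi : i ∈ S) :
    π (X i * ∏ j ∈ S, X j) = π (C (a i) * ∏ j ∈ S, X j) := by
  rw [Ideal.Quotient.mk_eq_mk_iff_sub_mem]
  have h : (X i * ∏ j ∈ S, X j : R) - C (a i) * ∏ j ∈ S, X j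
      = (X i * (X i - C (a i))) * ∏ j ∈ S.erase i, X j := by
    rw [← Finset.mul_prod_erase S _ hi]; ring
  rw [h]
  exact Ideal.mul_mem_right _ _ (mem2 a i)

lemma span_top_aux (i : Fin r) (q : MvPolynomial (Fin r) A ⧸ Igen a)
    (hq : q ∈ Submodule.span A (Set.range (bfun a))) :
    π (X i) * q ∈ Submodule.span A (Set.range (bfun a)) := by
  induction hq using Submodule.span_induction with
  | mem x hx =>
      obtain ⟨S, rfl⟩ := hx
      by_cases hi : i ∈ S.1
      · have : π (X i) * bfun a S = a i • bfun a S := by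
          rw [bfun, ← map_mul, pi_mul_prod a i S.1 hi, smul_mk]
        rw [this]
        exact Submodule.smul_mem _ _ (Submodule.subset_span ⟨S, rfl⟩)
      · have hins : π (X i) * bfun a S = π (∏ j ∈ insert i S.1, X j) := by
          rw [bfun, ← map_mul, Finset.prod_insert hi]
        by_cases hu : insert i S.1 = Finset.univ
        · rw [hins, hu, pi_prod_univ]
          exact Submodule.zero_mem _
        · rw [hins]
          exact Submodule.subset_span ⟨⟨insert i S.1, hu⟩, rfl⟩
  | zero => simp
  | add x y _ _ hx hy => rw [mul_add]; exact Submodule.add_mem _ hx hy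
  | smul c x _ hx => rw [mul_smul_comm]; exact Submodule.smul_mem _ _ hx

lemma span_top (hr : 1 ≤ r) :
    Submodule.span A (Set.range (bfun a)) = ⊤ := by
  rw [Submodule.eq_top_iff']
  intro x
  obtain ⟨f, rfl⟩ := Ideal.Quotient.mk_surjective x
  induction f using MvPolynomial.induction_on with
  | C c =>
      have hne : Nonempty (Fin r) := ⟨⟨0, hr⟩⟩
      have h0 : (∅ : Finset (Fin r)) ≠ Finset.univ := Ne.symm Finset.univ_nonempty.ne_empty
      have hc : π (C c) = c • bfun a ⟨∅, h0⟩ := by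
        rw [bfun, smul_mk, Finset.prod_empty, mul_one]
      rw [hc]
      exact Submodule.smul_mem _ _ (Submodule.subset_span ⟨_, rfl⟩)
  | add f g hf hg => rw [map_add]; exact Submodule.add_mem _ hf hg
  | mul_X f i hf => rw [map_mul, mul_comm]; exact span_top_aux a i _ hf

lemma evT_kills (T : Finset (Fin r)) (hT : T ≠ Finset.univ) :
    Igen a ≤ RingHom.ker ((aeval (fun i : Fin r => if i ∈ T then a i else 0) : MvPolynomial (Fin r) A →ₐ[A] A)).toRingHom := by
  rw [Igen, Ideal.span_le]
  rintro f (rfl | ⟨i, rfl⟩) <;> simp only [SetLike.mem_coe, RingHom.mem_ker, AlgHom.toRingHom_eq_coe,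
    RingHom.coe_coe, map_prod, map_mul, map_sub, aeval_X, aeval_C]
  · have hne : Tᶜ.Nonempty := by
      rw [← Finset.compl_ne_univ_iff_nonempty, compl_compl]; exact hT
    obtain ⟨i, hi⟩ := hne
    rw [Finset.mem_compl] at hi
    exact Finset.prod_eq_zero (Finset.mem_univ i) (if_neg hi)
  · by_cases hi : i ∈ T <;> simp [hi]

lemma prod_ite_subset (S T : Finset (Fin r)) :
    (∏ i ∈ S, if i ∈ T then a i else 0) = if S ⊆ T then ∏ i ∈ S, a i else 0 := by
  by_cases hST : S ⊆ T
  · rw [if_pos hST]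
    exact Finset.prod_congr rfl fun i hi => if_pos (hST hi)
  · rw [if_neg hST]
    obtain ⟨i, hiS, hiT⟩ := Finset.not_subset.mp hST
    exact Finset.prod_eq_zero hiS (if_neg hiT)

lemma lin_indep [IsDomain A] (ha : ∀ i, a i ≠ 0) : LinearIndependent A (bfun a) := by
  rw [Fintype.linearIndependent_iff]
  intro g hg
  set F : MvPolynomial (Fin r) A := ∑ S : {S : Finset (Fin r) // S ≠ Finset.univ},
    C (g S) * ∏ i ∈ S.1, X i with hF
  have hFI : F ∈ Igen a := by
    rw [← Ideal.Quotient.eq_zero_iff_mem, map_sum]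
    rw [← hg]
    exact Finset.sum_congr rfl fun S _ => (smul_mk a _ _).symm
  have key : ∀ T : Finset (Fin r), T ≠ Finset.univ →
      ∑ S : {S : Finset (Fin r) // S ≠ Finset.univ},
        (if S.1 ⊆ T then g S * ∏ i ∈ S.1, a i else 0) = 0 := by
    intro T hT
    have h0 : (aeval (fun i : Fin r => if i ∈ T then a i else 0) : MvPolynomial (Fin r) A →ₐ[A] A) F = 0 :=
      evT_kills a T hT hFI
    rw [hF, map_sum] at h0
    refine Eq.trans (Finset.sum_congr rfl fun S _ => ?_) h0
    rw [map_mul, aeval_C, map_prod]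
    simp only [aeval_X, Algebra.algebraMap_self, RingHom.id_apply]
    rw [prod_ite_subset, mul_ite, mul_zero]
  intro S0
  obtain ⟨T, hT⟩ := S0
  induction T using Finset.strongInductionOn with
  | _ T IH =>
  have hsum := key T hT
  rw [Finset.sum_eq_single_of_mem ⟨T, hT⟩ (Finset.mem_univ _)] at hsum
  · rw [if_pos (Finset.Subset.refl T)] at hsum
    rcases mul_eq_zero.mp hsum with h | h
    · exact h
    · exact absurd h (Finset.prod_ne_zero_iff.mpr fun i _ => ha i)
  · rintro ⟨S, hS⟩ _ hne
    by_cases hsub : S ⊆ T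
    · rw [if_pos hsub]
      have hss : S ⊂ T := lt_of_le_of_ne hsub (fun h => hne (Subtype.ext h))
      rw [IH S hss hS, zero_mul]
    · exact if_neg hsub

noncomputable def theBasis [IsDomain A] (hr : 1 ≤ r) (ha : ∀ i, a i ≠ 0) :
    Module.Basis {S : Finset (Fin r) // S ≠ Finset.univ} A (MvPolynomial (Fin r) A ⧸ Igen a) :=
  Module.Basis.mk (lin_indep a ha) (by rw [span_top a hr])

lemma card_idx : Fintype.card {S : Finset (Fin r) // S ≠ Finset.univ} = 2 ^ r - 1 := by
  have h1 : Fintype.card {S : Finset (Fin r) // S = Finset.univ} = 1 :=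
    Fintype.card_subtype_eq _
  have := Fintype.card_subtype_compl (fun S : Finset (Fin r) => S = Finset.univ)
  simp only [h1, Fintype.card_finset, Fintype.card_fin] at this
  convert this using 2

theorem stmt1 (p : ℕ) [Fact p.Prime] (r : ℕ) (hr : 1 ≤ r)
    (ℓ : Fin r → ℕ) (hℓ : ∀ i, (ℓ i).Prime) :
    Module.Free (Zp p)
      (MvPolynomial (Fin r) (Zp p) ⧸
        (Ideal.span (insert (∏ i : Fin r, X i)
          (Set.range fun i : Fin r => X i * (X i + 1 - C ((ℓ i : Zp p))))) :
            Ideal (MvPolynomial (Fin r) (Zp p)))) ∧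
    Module.finrank (Zp p)
      (MvPolynomial (Fin r) (Zp p) ⧸
        (Ideal.span (insert (∏ i : Fin r, X i)
          (Set.range fun i : Fin r => X i * (X i + 1 - C ((ℓ i : Zp p))))) :
            Ideal (MvPolynomial (Fin r) (Zp p)))) =
      2 ^ r - 1 := by
  have heq : Ideal.span (insert (∏ i : Fin r, X i)
      (Set.range fun i : Fin r => X i * (X i + 1 - C ((ℓ i : Zp p)))))
      = Igen (fun i : Fin r => ((ℓ i : Zp p) - 1)) := by
    rw [Igen]
    congr 1
    congr 1
    apply congrArg
    funext i
    rw [map_sub, map_one]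
    ring
  have ha : ∀ i : Fin r, ((ℓ i : Zp p) - 1) ≠ 0 := by
    intro i
    have h2 : 2 ≤ ℓ i := (hℓ i).two_le
    have h : ((ℓ i : ℤ) - 1 : ℤ) ≠ 0 := by omega
    intro hc
    apply h
    apply IsLocalization.injective (Zp p) (Ideal.span {(p:ℤ)}).primeCompl_le_nonZeroDivisors
    rw [map_sub, map_zero, map_one]
    push_cast
    exact hc
  rw [heq]
  have b := theBasis (fun i : Fin r => ((ℓ i : Zp p) - 1)) hr ha
  exact ⟨Module.Free.of_basis b, (Module.finrank_eq_card_basis b).trans card_idx⟩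
end

section
/- Let p be a prime number, Z_(p) the localization of the integers at the prime p, let r ≥ 1, and let ℓ_1, …, ℓ_r be prime numbers. Let R = Z_(p)[x_1, …, x_r], let I' ⊆ R be the ideal generated by x_i·(x_i + 1 − ℓ_i) for i = 1, …, r, and let m̄ denote the image of the monomial x_1·x_2⋯x_r in the quotient ring R/I'. Then the ideal of R/I' generated by m̄ is equal to the Z_(p)-submodule of R/I' spanned by the single element m̄, and this submodule is a direct summand of R/I' as a Z_(p)-module. -/
set_option synthInstance.maxHeartbeats 800000
set_option maxHeartbeats 1000000
open MvPolynomial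

section Aux
variable (p : ℕ) [Fact p.Prime] (r : ℕ) (ℓ : Fin r → ℕ)

/-- Coefficient of the reduced top monomial. -/
noncomputable def wfun : (Fin r →₀ ℕ) → Zp p := fun d =>
  if ∀ i, 1 ≤ d i then ∏ i, ((ℓ i : Zp p) - 1) ^ (d i - 1) else 0

/-- The `Z_(p)`-linear functional extracting the coefficient of the top squarefree
monomial in the reduced normal form. -/
noncomputable def psi0 : MvPolynomial (Fin r) (Zp p) →ₗ[Zp p] Zp p :=
  Finsupp.linearCombination (Zp p) (wfun p r ℓ) ∘ₗ
    (AddMonoidAlgebra.coeffLinearEquiv (Zp p)).toLinearMap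

lemma psi0_monomial (d : Fin r →₀ ℕ) (c : Zp p) :
    psi0 p r ℓ (monomial d c) = c * wfun p r ℓ d := by
  rw [← smul_eq_mul, psi0, LinearMap.comp_apply]
  exact Finsupp.linearCombination_single ..

lemma wfun_step (i : Fin r) (e : Fin r →₀ ℕ) :
    wfun p r ℓ (e + Finsupp.single i 2)
      = ((ℓ i : Zp p) - 1) * wfun p r ℓ (e + Finsupp.single i 1) := by
  classical
  by_cases h : ∀ j, j ≠ i → 1 ≤ e j
  · have hc : ∀ k : ℕ, 1 ≤ k → ∀ j, 1 ≤ (e + Finsupp.single i k) j := by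
      intro k hk j
      rcases eq_or_ne j i with rfl | hj
      · simp [Finsupp.single_apply]; omega
      · simpa [Finsupp.single_apply, (Ne.symm hj)] using h j hj
    have hprod : ∀ k : ℕ, 1 ≤ k →
        (∏ j, ((ℓ j : Zp p) - 1) ^ ((e + Finsupp.single i k) j - 1))
          = ((ℓ i : Zp p) - 1) ^ (e i + k - 1) *
            ∏ j ∈ Finset.univ.erase i, ((ℓ j : Zp p) - 1) ^ (e j - 1) := by
      intro k hk
      rw [← Finset.mul_prod_erase Finset.univ _ (Finset.mem_univ i)]
      congr 1
      · simp [Finsupp.single_apply]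
      · refine Finset.prod_congr rfl fun j hj => ?_
        have hj' : j ≠ i := (Finset.mem_erase.mp hj).1
        simp [Finsupp.single_apply, Ne.symm hj']
    rw [wfun, wfun, if_pos (hc 2 (by omega)), if_pos (hc 1 (by omega)),
      hprod 2 (by omega), hprod 1 (by omega)]
    have h2 : e i + 2 - 1 = (e i) + 1 := by omega
    have h1 : e i + 1 - 1 = e i := by omega
    rw [h2, h1, pow_succ]
    ring
  · push_neg at h
    obtain ⟨j, hj, hje⟩ := h
    have hz : ∀ k : ℕ, ¬ ∀ j', 1 ≤ (e + Finsupp.single i k) j' := by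
      intro k hk
      have := hk j
      simp [Finsupp.single_apply, Ne.symm hj] at this
      omega
    rw [wfun, wfun, if_neg (hz 2), if_neg (hz 1), mul_zero]

lemma psi0_mul_gen (i : Fin r) (f : MvPolynomial (Fin r) (Zp p)) :
    psi0 p r ℓ (f * (X i * (X i + 1 - C ((ℓ i : Zp p))))) = 0 := by
  induction f using MvPolynomial.induction_on' with
  | monomial d c =>
    have expand : (monomial d c : MvPolynomial (Fin r) (Zp p)) *
        (X i * (X i + 1 - C ((ℓ i : Zp p))))
        = monomial (d + Finsupp.single i 2) c + monomial (d + Finsupp.single i 1) c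
          - monomial (d + Finsupp.single i 1) (c * (ℓ i : Zp p)) := by
      have h2 : (X i : MvPolynomial (Fin r) (Zp p)) ^ 2 = monomial (Finsupp.single i 2) 1 :=
        X_pow_eq_monomial
      have h3 : C ((ℓ i : Zp p)) * X i = monomial (Finsupp.single i 1) ((ℓ i : Zp p)) := by
        rw [← C_mul_X_pow_eq_monomial, pow_one]
      have h1 : (X i : MvPolynomial (Fin r) (Zp p)) = monomial (Finsupp.single i 1) 1 := by
        rw [← pow_one (X i : MvPolynomial (Fin r) (Zp p)), X_pow_eq_monomial]
      rw [show (X i : MvPolynomial (Fin r) (Zp p)) * (X i + 1 - C ((ℓ i : Zp p)))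
          = X i ^ 2 + X i - C ((ℓ i : Zp p)) * X i by ring,
        mul_sub, mul_add, h2, h3, h1, monomial_mul, monomial_mul, monomial_mul, mul_one]
    rw [expand, map_sub, map_add, psi0_monomial, psi0_monomial, psi0_monomial,
      wfun_step p r ℓ i d]
    ring
  | add f g hf hg => rw [add_mul, map_add, hf, hg, add_zero]

lemma psi0_vanish (x : MvPolynomial (Fin r) (Zp p))
    (hx : x ∈ Ideal.span (Set.range fun i : Fin r =>
      X i * (X i + 1 - C ((ℓ i : Zp p))))) : psi0 p r ℓ x = 0 := by
  have key : ∀ f, psi0 p r ℓ (f * x) = 0 := by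
    induction hx using Submodule.span_induction with
    | mem x h =>
      obtain ⟨i, rfl⟩ := h
      intro f; exact psi0_mul_gen p r ℓ i f
    | zero => intro f; simp
    | add x y _ _ hx hy => intro f; rw [mul_add, map_add, hx f, hy f, add_zero]
    | smul a x _ hx => intro f; rw [smul_eq_mul, ← mul_assoc, hx (f * a)]
  simpa using key 1

/-- The functional `psi0` descends to the quotient. -/
noncomputable def psiq (I : Ideal (MvPolynomial (Fin r) (Zp p)))
    (h : I.restrictScalars (Zp p) ≤ LinearMap.ker (psi0 p r ℓ)) :
    (MvPolynomial (Fin r) (Zp p) ⧸ I) →ₗ[Zp p] Zp p :=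
  (Submodule.liftQ _ (psi0 p r ℓ) h) ∘ₗ
    (Submodule.Quotient.restrictScalarsEquiv (Zp p) I).symm.toLinearMap

lemma psiq_mk (I : Ideal (MvPolynomial (Fin r) (Zp p)))
    (h : I.restrictScalars (Zp p) ≤ LinearMap.ker (psi0 p r ℓ))
    (f : MvPolynomial (Fin r) (Zp p)) :
    psiq p r ℓ I h (Ideal.Quotient.mk I f) = psi0 p r ℓ f := by
  rw [psiq, LinearMap.comp_apply, LinearEquiv.coe_toLinearMap,
    ← Ideal.Quotient.mk_eq_mk, Submodule.Quotient.restrictScalarsEquiv_symm_mk,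
    Submodule.liftQ_apply]

lemma prod_X_monomial (s : Finset (Fin r)) :
    (∏ i ∈ s, X i : MvPolynomial (Fin r) (Zp p))
      = monomial (∑ i ∈ s, Finsupp.single i 1) 1 := by
  classical
  induction s using Finset.induction_on with
  | empty => simp [monomial_zero']
  | insert a s ha ih =>
    rw [Finset.prod_insert ha, Finset.sum_insert ha, ih,
      show (X _ : MvPolynomial (Fin r) (Zp p)) = monomial (Finsupp.single _ 1) 1 by
        rw [← pow_one (X _ : MvPolynomial (Fin r) (Zp p)), X_pow_eq_monomial],
      monomial_mul, one_mul]

lemma psi0_prod : psi0 p r ℓ (∏ i : Fin r, X i) = 1 := by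
  rw [prod_X_monomial, psi0_monomial, one_mul, wfun]
  have hd : ∀ j : Fin r, (∑ i : Fin r, Finsupp.single i (1 : ℕ)) j = 1 := by
    intro j
    rw [Finsupp.finset_sum_apply]
    simp [Finsupp.single_apply]
  rw [if_pos (fun j => (hd j).ge)]
  simp [hd]

lemma isCompl_span_ker {R M : Type*} [CommRing R] [AddCommGroup M] [Module R M]
    (f : M →ₗ[R] R) (m : M) (hfm : f m = 1) :
    IsCompl (Submodule.span R {m}) (LinearMap.ker f) := by
  constructor
  · rw [disjoint_iff, eq_bot_iff]
    intro x hx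
    rw [Submodule.mem_inf] at hx
    obtain ⟨hx1, hx2⟩ := hx
    obtain ⟨c, rfl⟩ := Submodule.mem_span_singleton.mp hx1
    rw [LinearMap.mem_ker, map_smul, hfm, smul_eq_mul, mul_one] at hx2
    rw [Submodule.mem_bot, hx2, zero_smul]
  · rw [codisjoint_iff, eq_top_iff]
    intro x _
    have hx : x = f x • m + (x - f x • m) := by abel
    rw [hx]
    refine Submodule.add_mem_sup
      (Submodule.smul_mem _ _ (Submodule.mem_span_singleton_self m)) ?_
    rw [LinearMap.mem_ker, map_sub, map_smul, hfm, smul_eq_mul, mul_one, sub_self]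

end Aux

theorem stmt2 (p : ℕ) [Fact p.Prime] (r : ℕ) (hr : 1 ≤ r)
    (ℓ : Fin r → ℕ) (hℓ : ∀ i, (ℓ i).Prime)
    (I' : Ideal (MvPolynomial (Fin r) (Zp p)))
    (hI' : I' = Ideal.span (Set.range fun i : Fin r =>
      X i * (X i + 1 - C ((ℓ i : Zp p)))))
    (m : MvPolynomial (Fin r) (Zp p) ⧸ I')
    (hm : m = Ideal.Quotient.mk I' (∏ i : Fin r, X i)) :
    Submodule.restrictScalars (Zp p) (Ideal.span {m}) = Submodule.span (Zp p) {m} ∧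
    ∃ N : Submodule (Zp p) (MvPolynomial (Fin r) (Zp p) ⧸ I'),
      IsCompl (Submodule.span (Zp p) {m}) N := by
  subst hm
  have hle : I'.restrictScalars (Zp p) ≤ LinearMap.ker (psi0 p r ℓ) := by
    rw [hI']
    exact fun x hx => psi0_vanish p r ℓ x hx
  set M : MvPolynomial (Fin r) (Zp p) ⧸ I' := Ideal.Quotient.mk I' (∏ i : Fin r, X i) with hM
  have hsmul : ∀ (a : Zp p) (x : MvPolynomial (Fin r) (Zp p)),
      a • (Ideal.Quotient.mk I' x) = Ideal.Quotient.mk I' (C a * x) := by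
    intro a x
    rw [← smul_eq_C_mul, ← Ideal.Quotient.mk_eq_mk, ← Ideal.Quotient.mk_eq_mk,
      Submodule.Quotient.mk_smul]
  have hXM : ∀ i : Fin r, Ideal.Quotient.mk I' (X i) * M = ((ℓ i : Zp p) - 1) • M := by
    intro i
    rw [hM, hsmul, ← map_mul, Ideal.Quotient.eq]
    rw [← Finset.mul_prod_erase Finset.univ X (Finset.mem_univ i)]
    have hkey : (X i : MvPolynomial (Fin r) (Zp p)) *
          (X i * ∏ j ∈ Finset.univ.erase i, X j)
        - C ((ℓ i : Zp p) - 1) * (X i * ∏ j ∈ Finset.univ.erase i, X j)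
        = (X i * (X i + 1 - C ((ℓ i : Zp p)))) * ∏ j ∈ Finset.univ.erase i, X j := by
      rw [map_sub, map_one]; ring
    rw [hkey, hI']
    exact Ideal.mul_mem_right _ _ (Ideal.subset_span ⟨i, rfl⟩)
  have hmem : ∀ f : MvPolynomial (Fin r) (Zp p),
      Ideal.Quotient.mk I' f * M ∈ Submodule.span (Zp p) {M} := by
    intro f
    induction f using MvPolynomial.induction_on with
    | C a =>
      rw [show (Ideal.Quotient.mk I' (C a)) * M = a • M by rw [hM, hsmul, ← map_mul]]
      exact Submodule.smul_mem _ _ (Submodule.mem_span_singleton_self M)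
    | add f g hf hg => rw [map_add, add_mul]; exact Submodule.add_mem _ hf hg
    | mul_X f i hf =>
      rw [map_mul, mul_assoc (Ideal.Quotient.mk I' f) (Ideal.Quotient.mk I' (X i)) M, hXM i,
        mul_smul_comm]
      exact Submodule.smul_mem _ _ hf
  constructor
  · apply le_antisymm
    · intro x hx
      rw [Submodule.restrictScalars_mem] at hx
      obtain ⟨a, rfl⟩ := Ideal.mem_span_singleton'.mp hx
      obtain ⟨f, rfl⟩ := Ideal.Quotient.mk_surjective a
      exact hmem f
    · rw [Submodule.span_le, Set.singleton_subset_iff]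
      exact Ideal.subset_span rfl
  · refine ⟨LinearMap.ker (psiq p r ℓ I' hle), isCompl_span_ker _ _ ?_⟩
    rw [hM, psiq_mk, psi0_prod]
end

section
/- Let A be a commutative ring and let M be an A-module whose underlying set is finite. Then the character module M^∨ = Hom_ℤ(M, ℚ/ℤ), with its natural A-module structure given by (a·φ)(x) = φ(a·x), is a cyclic A-module if and only if for every maximal ideal m of A, the m-torsion submodule M[m] = {x ∈ M : a·x = 0 for all a ∈ m} is a cyclic A-module (equivalently, M[m] has dimension at most 1 as a vector space over the field A/m). -/
namespace Stmt4Helper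


open Submodule

/-- The canonical character of `ZMod n`. -/
noncomputable def chi (n : ℕ) [NeZero n] : ZMod n →+ AddCircle (1 : ℚ) :=
  ZMod.lift n ⟨zmultiplesHom _ ((((n : ℚ)⁻¹ : ℚ)) : AddCircle (1 : ℚ)), by
    have hn : (n : ℚ) ≠ 0 := Nat.cast_ne_zero.mpr (NeZero.ne n)
    show (n : ℤ) • (((n : ℚ)⁻¹ : ℚ) : AddCircle (1:ℚ)) = 0
    rw [← AddCircle.coe_zsmul]
    have : (n : ℤ) • ((n : ℚ)⁻¹ : ℚ) = 1 := by
      rw [zsmul_eq_mul]; push_cast; field_simp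
    rw [this]
    exact AddCircle.coe_period 1⟩

lemma chi_intCast (n : ℕ) [NeZero n] (z : ℤ) :
    chi n (z : ZMod n) = (((z : ℚ) * (n : ℚ)⁻¹ : ℚ) : AddCircle (1 : ℚ)) := by
  rw [chi, ZMod.lift_coe]
  show z • (((n : ℚ)⁻¹ : ℚ) : AddCircle (1:ℚ)) = _
  rw [← AddCircle.coe_zsmul, zsmul_eq_mul]

lemma coe_eq_zero_iff' {q : ℚ} : ((q : ℚ) : AddCircle (1:ℚ)) = 0 ↔ ∃ z : ℤ, (z : ℚ) = q := by
  rw [AddCircle.coe_eq_zero_iff]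
  simp [zsmul_eq_mul]

lemma chi_injective (n : ℕ) [NeZero n] : Function.Injective (chi n) := by
  have hn : (n : ℚ) ≠ 0 := Nat.cast_ne_zero.mpr (NeZero.ne n)
  rw [injective_iff_map_eq_zero]
  intro x hx
  have hval : x = ((x.val : ℤ) : ZMod n) := by
    push_cast [ZMod.natCast_val, ZMod.cast_id]; rfl
  rw [hval, chi_intCast] at hx
  obtain ⟨z, hz⟩ := coe_eq_zero_iff'.mp hx
  have hmul := congrArg (· * (n : ℚ)) hz
  simp only [mul_assoc, inv_mul_cancel₀ hn, mul_one] at hmul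
  -- hmul : z * n = x.val
  have hzint : ((x.val : ℤ) : ℚ) = ((z * n : ℤ) : ℚ) := by push_cast at hmul ⊢; linarith [hmul]
  have hzint' : (x.val : ℤ) = z * n := by exact_mod_cast hzint
  have hdvd : (n : ℕ) ∣ x.val := by
    have : (n : ℤ) ∣ (x.val : ℤ) := ⟨z, by rw [hzint', mul_comm]⟩
    exact_mod_cast this
  have hv0 : x.val = 0 := Nat.eq_zero_of_dvd_of_lt hdvd (ZMod.val_lt x)
  rw [hval, hv0]
  simp

/-- torsion classification in `ℚ/ℤ`. -/
lemma torsion_eq (n : ℕ) [NeZero n] (c : AddCircle (1:ℚ)) (hc : (n : ℤ) • c = 0) :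
    ∃ x : ZMod n, chi n x = c := by
  have hn : (n : ℚ) ≠ 0 := Nat.cast_ne_zero.mpr (NeZero.ne n)
  induction c using QuotientAddGroup.induction_on with
  | H q =>
  rw [show ((q : AddCircle (1:ℚ))) = ((q : ℚ) : AddCircle (1:ℚ)) from rfl, ← AddCircle.coe_zsmul] at hc
  obtain ⟨z, hz⟩ := coe_eq_zero_iff'.mp hc
  refine ⟨(z : ZMod n), ?_⟩
  rw [chi_intCast]
  rw [zsmul_eq_mul] at hz
  push_cast at hz
  congr 1
  field_simp
  linarith [hz]

/-- `ZMod n` is equivalent to the `n`-torsion of `ℚ/ℤ`. -/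
noncomputable def zmodEquivTorsion (n : ℕ) [NeZero n] :
    ZMod n ≃ {c : AddCircle (1:ℚ) // (n : ℤ) • c = 0} :=
  Equiv.ofBijective (fun x => ⟨chi n x, by
    rw [← map_zsmul]
    have h0 : (n : ℤ) • x = 0 := by
      rw [zsmul_eq_mul]
      push_cast [ZMod.natCast_self]
      ring
    rw [h0, map_zero]⟩)
    ⟨fun a b hab => chi_injective n (congrArg Subtype.val hab),
     fun ⟨c, hc⟩ => by
      obtain ⟨x, hx⟩ := torsion_eq n c hc
      exact ⟨x, Subtype.ext hx⟩⟩

lemma card_char_zmod (n : ℕ) [NeZero n] :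
    Nat.card (ZMod n →+ AddCircle (1:ℚ)) = n := by
  have e1 : (ZMod n →+ AddCircle (1:ℚ)) ≃ {f : ℤ →+ AddCircle (1:ℚ) // f ((n : ℤ)) = 0} :=
    (ZMod.lift n).symm
  have e2 : {f : ℤ →+ AddCircle (1:ℚ) // f ((n : ℤ)) = 0} ≃
      {c : AddCircle (1:ℚ) // (n : ℤ) • c = 0} := by
    refine Equiv.subtypeEquiv (zmultiplesHom (AddCircle (1:ℚ))).symm (fun f => ?_)
    have : f ((n:ℤ)) = (n : ℤ) • f 1 := by
      rw [← map_zsmul f (n : ℤ) 1, smul_eq_mul, mul_one]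
    rw [this]
    rfl
  rw [Nat.card_congr (e1.trans (e2.trans (zmodEquivTorsion n).symm)), Nat.card_zmod]




/-- Homs out of equivalent groups are equivalent. -/
def compEquiv {G H C : Type*} [AddCommGroup G] [AddCommGroup H] [AddCommGroup C]
    (e : G ≃+ H) : (G →+ C) ≃ (H →+ C) where
  toFun f := f.comp e.symm.toAddMonoidHom
  invFun f := f.comp e.toAddMonoidHom
  left_inv f := by ext g; simp
  right_inv f := by ext h; simp

lemma card_char (G : Type*) [AddCommGroup G] [Finite G] :
    Nat.card (CharacterModule G) = Nat.card G := by
  classical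
  obtain ⟨ι, hι, n, hlt, ⟨e⟩⟩ := AddCommGroup.equiv_directSum_zmod_of_finite' G
  haveI : ∀ i, NeZero (n i) := fun i => ⟨by have := hlt i; omega⟩
  have e' : G ≃+ (Π₀ i, ZMod (n i)) := e
  calc Nat.card (CharacterModule G)
      = Nat.card ((Π₀ i, ZMod (n i)) →+ AddCircle (1:ℚ)) :=
        Nat.card_congr (compEquiv e')
    _ = Nat.card (∀ i, ZMod (n i) →+ AddCircle (1:ℚ)) :=
        Nat.card_congr (DFinsupp.liftAddHom (β := fun i => ZMod (n i))).toEquiv.symm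
    _ = ∏ i, Nat.card (ZMod (n i) →+ AddCircle (1:ℚ)) := Nat.card_pi
    _ = ∏ i, Nat.card (ZMod (n i)) := by simp [card_char_zmod, Nat.card_zmod]
    _ = Nat.card (∀ i, ZMod (n i)) := Nat.card_pi.symm
    _ = Nat.card (Π₀ i, ZMod (n i)) := (Nat.card_congr (DFinsupp.equivFunOnFintype)).symm
    _ = Nat.card G := Nat.card_congr e'.toEquiv.symm

lemma finite_char (G : Type*) [AddCommGroup G] [Finite G] : Finite (CharacterModule G) := by
  apply Nat.finite_of_card_ne_zero
  rw [card_char]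
  exact Nat.card_pos.ne'




variable (A : Type*) [CommRing A] (M : Type*) [AddCommGroup M] [Module A M]

/-- Evaluation into the double character module. -/
def evalMap : M →ₗ[A] CharacterModule (CharacterModule M) where
  toFun x := { toFun := fun φ => φ x, map_zero' := rfl, map_add' := fun _ _ => rfl }
  map_add' x y := by ext φ; exact map_add φ x y
  map_smul' a x := by ext φ; rfl

lemma evalMap_injective : Function.Injective (evalMap A M) := by
  intro x y hxy
  have h : ∀ φ : CharacterModule M, φ (x - y) = 0 := by
    intro φ
    have h2 : φ x = φ y := DFunLike.congr_fun hxy φ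
    rw [map_sub, h2, sub_self]
  have := CharacterModule.eq_zero_of_character_apply h
  exact sub_eq_zero.mp this

/-- For finite `M`, evaluation is a linear equivalence. -/
noncomputable def evalEquiv [Finite M] : M ≃ₗ[A] CharacterModule (CharacterModule M) := by
  haveI := finite_char M
  haveI := finite_char (CharacterModule M)
  refine LinearEquiv.ofBijective (evalMap A M)
    ((Nat.bijective_iff_injective_and_card _).mpr ⟨evalMap_injective A M, ?_⟩)
  rw [card_char, card_char]

/-- Torsion submodules have equal cardinality under linear equivalence. -/
lemma card_torsion_congr {M' : Type*} [AddCommGroup M'] [Module A M'] (e : M ≃ₗ[A] M')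
    (s : Set A) :
    Nat.card (Submodule.torsionBySet A M s) = Nat.card (Submodule.torsionBySet A M' s) := by
  apply Nat.card_congr
  refine Equiv.subtypeEquiv e.toEquiv (fun x => ?_)
  rw [Submodule.mem_torsionBySet_iff, Submodule.mem_torsionBySet_iff]
  constructor
  · intro h a
    have := congrArg e (h a)
    simpa using this
  · intro h a
    have := h a
    rw [LinearEquiv.coe_toEquiv, ← map_smul] at this
    have := congrArg e.symm this
    simpa using this

/-- Characters of `N ⧸ I•⊤` are the `I`-torsion characters of `N`. -/
lemma card_char_quotient (I : Ideal A) :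
    Nat.card (CharacterModule (M ⧸ (I • ⊤ : Submodule A M))) =
      Nat.card (Submodule.torsionBySet A (CharacterModule M) (I : Set A)) := by
  set p : Submodule A M := I • ⊤ with hp
  have htor := Module.isTorsionBySet_quotient_ideal_smul M I
  apply Nat.card_congr
  refine Equiv.ofBijective (fun φ => ⟨φ.comp p.mkQ.toAddMonoidHom, ?_⟩) ⟨?_, ?_⟩
  · refine (Submodule.mem_torsionBySet_iff _ _).mpr ?_
    rintro ⟨a, ha⟩
    ext x
    show φ (p.mkQ (a • x)) = 0
    rw [map_smul]
    have h0 : a • (p.mkQ x) = 0 := htor (a := ⟨a, ha⟩)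
    rw [h0, map_zero]
  · intro φ ψ h
    have h' := congrArg Subtype.val h
    ext q
    obtain ⟨x, rfl⟩ := p.mkQ_surjective q
    exact DFunLike.congr_fun h' x
  · rintro ⟨ψ, hψ⟩
    rw [Submodule.mem_torsionBySet_iff] at hψ
    have key : ∀ z ∈ (I • ⊤ : Submodule A M), ψ z = 0 := by
      intro z hz
      refine Submodule.smul_induction_on (p := fun w => ψ w = 0) hz
        (fun r hr x _ => ?_) (fun x y hx hy => ?_)
      · show ψ (r • x) = 0
        have h1 : (r • ψ) x = 0 := by
          have h2 : r • ψ = 0 := by simpa using hψ ⟨r, hr⟩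
          rw [h2]; rfl
        rwa [CharacterModule.smul_apply] at h1
      · show ψ (x + y) = 0
        have hx' : ψ x = 0 := hx
        have hy' : ψ y = 0 := hy
        rw [map_add, hx', hy', add_zero]
    have hker : p.restrictScalars ℤ ≤ LinearMap.ker ψ.toIntLinearMap := by
      intro z hz
      exact key z hz
    refine ⟨((Submodule.liftQ (p.restrictScalars ℤ) ψ.toIntLinearMap hker).comp
      (Submodule.Quotient.restrictScalarsEquiv ℤ p).symm.toLinearMap).toAddMonoidHom, ?_⟩
    apply Subtype.ext
    ext x
    show (Submodule.liftQ (p.restrictScalars ℤ) ψ.toIntLinearMap hker)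
      ((Submodule.Quotient.restrictScalarsEquiv ℤ p).symm (p.mkQ x)) = ψ x
    have hmk : (Submodule.Quotient.restrictScalarsEquiv ℤ p).symm (p.mkQ x) =
        Submodule.Quotient.mk x := by
      apply (Submodule.Quotient.restrictScalarsEquiv ℤ p).injective
      rw [LinearEquiv.apply_symm_apply, Submodule.Quotient.restrictScalarsEquiv_mk]
      rfl
    rw [hmk]
    exact Submodule.liftQ_apply _ _ _



/-- Cyclic module predicate. -/
def Cyc (A V : Type*) [CommRing A] [AddCommGroup V] [Module A V] : Prop :=
  ∃ x : V, ∀ y : V, ∃ a : A, a • x = y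

variable (A : Type*) [CommRing A]

lemma cyc_iff_span (V : Type*) [AddCommGroup V] [Module A V] :
    (∃ x : V, Submodule.span A {x} = ⊤) ↔ Cyc A V := by
  constructor
  · rintro ⟨x, hx⟩
    refine ⟨x, fun y => Submodule.mem_span_singleton.mp ?_⟩
    rw [hx]; trivial
  · rintro ⟨x, hx⟩
    exact ⟨x, Submodule.eq_top_iff'.mpr fun y => Submodule.mem_span_singleton.mpr (hx y)⟩

lemma finrank_zero_of_finite_of_infinite (k V : Type*) [Field k] [Infinite k]
    [AddCommGroup V] [Module k V] [Finite V] : Module.finrank k V = 0 := by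
  haveI : Module.Finite k V := Module.Finite.of_finite
  by_contra h
  have hpos : 0 < Module.finrank k V := Nat.pos_of_ne_zero h
  haveI : Nontrivial V := Module.finrank_pos_iff.mp hpos
  obtain ⟨v, hv⟩ := exists_ne (0 : V)
  have hinj : Function.Injective (fun c : k => c • v) := by
    intro a b hab
    have : (a - b) • v = 0 := by
      rw [sub_smul, sub_eq_zero]; exact hab
    rcases smul_eq_zero.mp this with h1 | h2
    · exact sub_eq_zero.mp h1
    · exact absurd h2 hv
  haveI := Finite.of_injective _ hinj
  exact not_finite k

/-- Transfer cyclicity between two finite modules killed by a maximal ideal with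
equal cardinality. -/
lemma cyc_transfer (m : Ideal A) (hm : m.IsMaximal) (V W : Type*)
    [AddCommGroup V] [Module A V] [AddCommGroup W] [Module A W] [Finite V] [Finite W]
    (hV : Module.IsTorsionBySet A V (m : Set A)) (hW : Module.IsTorsionBySet A W (m : Set A))
    (hcard : Nat.card V = Nat.card W) : Cyc A V → Cyc A W := by
  classical
  haveI := hm
  letI kV : Module (A ⧸ m) V := hV.module
  letI kW : Module (A ⧸ m) W := hW.module
  letI : Field (A ⧸ m) := Ideal.Quotient.field m
  haveI : Module.Finite (A ⧸ m) V := Module.Finite.of_finite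
  haveI : Module.Finite (A ⧸ m) W := Module.Finite.of_finite
  have hfr : Module.finrank (A ⧸ m) V = Module.finrank (A ⧸ m) W := by
    cases finite_or_infinite (A ⧸ m) with
    | inl hfin =>
      haveI := Fintype.ofFinite (A ⧸ m)
      haveI := Fintype.ofFinite V
      haveI := Fintype.ofFinite W
      have h1 : Fintype.card V = Fintype.card (A ⧸ m) ^ Module.finrank (A ⧸ m) V :=
        Module.card_eq_pow_finrank
      have h2 : Fintype.card W = Fintype.card (A ⧸ m) ^ Module.finrank (A ⧸ m) W :=
        Module.card_eq_pow_finrank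
      have hc : Fintype.card V = Fintype.card W := by
        rw [← Nat.card_eq_fintype_card, ← Nat.card_eq_fintype_card]; exact hcard
      have hpow : Fintype.card (A ⧸ m) ^ Module.finrank (A ⧸ m) V =
          Fintype.card (A ⧸ m) ^ Module.finrank (A ⧸ m) W := by
        rw [← h1, ← h2]; exact hc
      exact Nat.pow_right_injective Fintype.one_lt_card hpow
    | inr hinf =>
      rw [finrank_zero_of_finite_of_infinite, finrank_zero_of_finite_of_infinite]
  obtain ⟨e⟩ : Nonempty (V ≃ₗ[A ⧸ m] W) := ⟨LinearEquiv.ofFinrankEq _ _ hfr⟩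
  rintro ⟨x, hx⟩
  refine ⟨e x, fun y => ?_⟩
  obtain ⟨a, ha⟩ := hx (e.symm y)
  refine ⟨a, ?_⟩
  have h1 : a • x = (Ideal.Quotient.mk m a) • x := (hV.mk_smul a x).symm
  have h2 : a • e x = (Ideal.Quotient.mk m a) • e x := (hW.mk_smul a (e x)).symm
  rw [h2, ← map_smul, ← h1, ha, LinearEquiv.apply_symm_apply]


open Submodule

variable (A : Type*) [CommRing A]

/-- Local-global principle for cyclicity of finite modules. -/
lemma cyc_of_local (N : Type*) [AddCommGroup N] [Module A N] [Finite N]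
    (h : ∀ m : Ideal A, m.IsMaximal →
      ∃ φ : N, span A {φ} ⊔ (m • (⊤ : Submodule A N)) = ⊤) :
    ∃ φ : N, span A {φ} = ⊤ := by
  classical
  haveI : Finite (Submodule A N) :=
    Finite.of_injective (fun p : Submodule A N => (p : Set N)) fun p q hpq => by
      exact SetLike.coe_injective hpq
  set S : Set (Submodule A N) :=
    {p | p ≠ ⊤ ∧ ∃ m : Ideal A, m.IsMaximal ∧ m • (⊤ : Submodule A N) = p} with hS
  haveI : Fintype S := Fintype.ofFinite S
  have hSm : ∀ p : S, ∃ m : Ideal A, m.IsMaximal ∧ m • (⊤ : Submodule A N) = (p : Submodule A N) :=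
    fun p => p.2.2
  choose mi hmax hsm using hSm
  have hminj : ∀ p q : S, mi p = mi q → p = q := by
    intro p q hpq
    apply Subtype.ext
    rw [← hsm p, ← hsm q, hpq]
  -- generators
  have hgen : ∀ p : S, ∃ φ : N, span A {φ} ⊔ (p : Submodule A N) = ⊤ := by
    intro p
    obtain ⟨φ, hφ⟩ := h (mi p) (hmax p)
    exact ⟨φ, by rw [← hsm p]; exact hφ⟩
  choose φs hφ using hgen
  -- CRT elements
  have crt : ∀ p : S, ∃ e : A, (e - 1) ∈ mi p ∧ ∀ q : S, q ≠ p → e ∈ mi q := by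
    intro p
    have hc : ∀ q : S, ∃ c : A, (q ≠ p → c ∈ mi q) ∧ c - 1 ∈ mi p := by
      intro q
      by_cases hqp : q = p
      · exact ⟨1, fun hne => absurd hqp hne, by simp⟩
      · have hne : mi q ≠ mi p := fun hh => hqp (hminj q p hh)
        have hco : mi q ⊔ mi p = ⊤ :=
          Ideal.IsMaximal.coprime_of_ne (hmax q) (hmax p) hne
        have h1 : (1 : A) ∈ mi q ⊔ mi p := by rw [hco]; trivial
        obtain ⟨a, ha, b, hb, hab⟩ := Submodule.mem_sup.mp h1
        refine ⟨a, fun _ => ha, ?_⟩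
        have : a - 1 = -b := by rw [← hab]; ring
        rw [this]
        exact neg_mem hb
    choose c hc1 hc2 using hc
    refine ⟨∏ q : S, c q, ?_, ?_⟩
    · have hmk : Ideal.Quotient.mk (mi p) (∏ q : S, c q) = Ideal.Quotient.mk (mi p) 1 := by
        rw [map_prod, map_one]
        apply Finset.prod_eq_one
        intro q _
        rw [← map_one (Ideal.Quotient.mk (mi p)), Ideal.Quotient.mk_eq_mk_iff_sub_mem]
        exact hc2 q
      rwa [Ideal.Quotient.mk_eq_mk_iff_sub_mem] at hmk
    · intro q hqp
      rw [← Finset.mul_prod_erase Finset.univ c (Finset.mem_univ q)]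
      exact Ideal.mul_mem_right _ _ (hc1 q hqp)
  choose es he1 he2 using crt
  set x : N := ∑ p : S, es p • φs p with hx
  have key : ∀ p : S, span A {x} ⊔ (p : Submodule A N) = ⊤ := by
    intro p
    have hxφ : x - φs p ∈ (p : Submodule A N) := by
      rw [← hsm p]
      have hsplit : x - φs p =
          (es p - 1) • φs p + ∑ q ∈ Finset.univ.erase p, es q • φs q := by
        rw [sub_smul, one_smul, hx, ← Finset.add_sum_erase Finset.univ _ (Finset.mem_univ p)]
        abel
      rw [hsplit]
      refine Submodule.add_mem _ (Submodule.smul_mem_smul (he1 p) Submodule.mem_top)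
        (Submodule.sum_mem _ fun q hq => ?_)
      exact Submodule.smul_mem_smul (he2 q p (Finset.ne_of_mem_erase hq).symm) Submodule.mem_top
    have hφmem : φs p ∈ span A {x} ⊔ (p : Submodule A N) := by
      have h1 : x ∈ span A {x} ⊔ (p : Submodule A N) :=
        (le_sup_left : span A {x} ≤ _) (Submodule.mem_span_singleton_self x)
      have h2 : x - φs p ∈ span A {x} ⊔ (p : Submodule A N) :=
        (le_sup_right : (p : Submodule A N) ≤ _) hxφ
      have := Submodule.sub_mem _ h1 h2
      simpa using this
    rw [eq_top_iff, ← hφ p]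
    refine sup_le ?_ le_sup_right
    rw [Submodule.span_le, Set.singleton_subset_iff]
    exact hφmem
  refine ⟨x, ?_⟩
  by_contra hxt
  obtain ⟨P, hP, hle⟩ :=
    (IsCoatomic.eq_top_or_exists_le_coatom (span A {x})).resolve_left hxt
  haveI : IsSimpleModule A (N ⧸ P) := isSimpleModule_iff_isCoatom.mpr hP
  set m := Module.annihilator A (N ⧸ P) with hmdef
  have hmm : m.IsMaximal := IsSimpleModule.annihilator_isMaximal
  have hsub : m • (⊤ : Submodule A N) ≤ P := by
    rw [Submodule.smul_le]
    intro r hr n _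
    have h0 : r • (Submodule.Quotient.mk n : N ⧸ P) = 0 :=
      Module.mem_annihilator.mp hr _
    rw [← Submodule.Quotient.mk_smul] at h0
    exact (Submodule.Quotient.mk_eq_zero P).mp h0
  have hne : m • (⊤ : Submodule A N) ≠ ⊤ := by
    intro hh
    rw [hh] at hsub
    exact hP.1 (top_unique hsub)
  have hpS : (m • (⊤ : Submodule A N)) ∈ S := ⟨hne, m, hmm, rfl⟩
  have hk := key ⟨_, hpS⟩
  have hspan : span A {x} ≤ P := by
    rw [Submodule.span_le, Set.singleton_subset_iff]
    exact hle (Submodule.mem_span_singleton_self x)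
  have htot : (⊤ : Submodule A N) ≤ P := by
    rw [← hk]
    exact sup_le hspan hsub
  exact hP.1 (top_unique htot)



variable (A : Type*) [CommRing A] (M : Type*) [AddCommGroup M] [Module A M] [Finite M]

/-- The bridge: local cyclicity of the character module versus cyclicity of torsion. -/
lemma bridge (m : Ideal A) (hm : m.IsMaximal) :
    (∃ φ : CharacterModule M, span A {φ} ⊔ (m • (⊤ : Submodule A (CharacterModule M))) = ⊤) ↔
      ∃ x : Submodule.torsionBySet A M (m : Set A), Submodule.span A {x} = ⊤ := by
  haveI finN : Finite (CharacterModule M) := finite_char M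
  set N := CharacterModule M with hN
  set p : Submodule A N := m • ⊤ with hp
  haveI finQ : Finite (N ⧸ p) := Finite.of_surjective _ (Submodule.mkQ_surjective p)
  -- step 1
  have step1 : (∃ φ : N, span A {φ} ⊔ p = ⊤) ↔ Cyc A (N ⧸ p) := by
    constructor
    · rintro ⟨φ, hφ⟩
      refine ⟨p.mkQ φ, fun y => ?_⟩
      obtain ⟨z, rfl⟩ := p.mkQ_surjective y
      have hz : z ∈ span A {φ} ⊔ p := by rw [hφ]; trivial
      obtain ⟨u, hu, v, hv, rfl⟩ := Submodule.mem_sup.mp hz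
      obtain ⟨a, rfl⟩ := Submodule.mem_span_singleton.mp hu
      refine ⟨a, ?_⟩
      rw [map_add, map_smul]
      have hv0 : p.mkQ v = 0 := by
        rw [Submodule.mkQ_apply, Submodule.Quotient.mk_eq_zero]
        exact hv
      rw [hv0, add_zero]
    · rintro ⟨y0, hy⟩
      obtain ⟨φ, rfl⟩ := p.mkQ_surjective y0
      refine ⟨φ, top_unique fun z _ => ?_⟩
      obtain ⟨a, ha⟩ := hy (p.mkQ z)
      rw [← map_smul] at ha
      have hz : a • φ - z ∈ p := by
        rw [← Submodule.Quotient.eq p]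
        exact ha
      apply Submodule.mem_sup.mpr
      refine ⟨a • φ, Submodule.mem_span_singleton.mpr ⟨a, rfl⟩, z - a • φ, ?_, by abel⟩
      have := Submodule.neg_mem p hz
      simpa using this
  -- step 2
  have htorQ : Module.IsTorsionBySet A (N ⧸ p) (m : Set A) :=
    Module.isTorsionBySet_quotient_ideal_smul N m
  have htorT : Module.IsTorsionBySet A (Submodule.torsionBySet A M (m : Set A)) (m : Set A) :=
    Submodule.torsionBySet_isTorsionBySet (m : Set A)
  have hcard : Nat.card (N ⧸ p) = Nat.card (Submodule.torsionBySet A M (m : Set A)) := by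
    calc Nat.card (N ⧸ p) = Nat.card (CharacterModule (N ⧸ p)) := (card_char _).symm
      _ = Nat.card (Submodule.torsionBySet A (CharacterModule N) (m : Set A)) :=
          card_char_quotient A N m
      _ = Nat.card (Submodule.torsionBySet A M (m : Set A)) :=
          (card_torsion_congr A M (evalEquiv A M) (m : Set A)).symm
  have step2 : Cyc A (N ⧸ p) ↔ Cyc A (Submodule.torsionBySet A M (m : Set A)) :=
    ⟨cyc_transfer A m hm _ _ htorQ htorT hcard,
     cyc_transfer A m hm _ _ htorT htorQ hcard.symm⟩
  rw [step1, step2, ← cyc_iff_span A]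


end Stmt4Helper


open Stmt4Helper in
theorem stmt4 (A : Type*) [CommRing A] (M : Type*)
    [AddCommGroup M] [Module A M] [Finite M] :
    (∃ φ : CharacterModule M, Submodule.span A {φ} = ⊤) ↔
      ∀ m : Ideal A, m.IsMaximal →
        ∃ x : Submodule.torsionBySet A M (m : Set A),
          Submodule.span A {x} = ⊤ := by
  haveI : Finite (CharacterModule M) := finite_char M
  constructor
  · rintro ⟨φ, hφ⟩ m hm
    refine (bridge A M m hm).mp ⟨φ, ?_⟩
    rw [hφ, top_sup_eq]
  · intro h
    apply cyc_of_local
    intro m hm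
    exact (bridge A M m hm).mpr (h m hm)
end

section
/- Let d be a squarefree positive integer and let s be a positive divisor of d. Then Σ_{t} μ(d/t) · σ(d/t) · σ(t/s) = 1 if s = d and = 0 if s ≠ d, where the sum is over the positive divisors t of d that are divisible by s, μ is the Möbius function, and σ is the sum-of-divisors function. -/
open ArithmeticFunction Finset
open scoped ArithmeticFunction.sigma

noncomputable def F : ArithmeticFunction ℤ := (pmul moebius ((σ 1 : ArithmeticFunction ℕ) : ArithmeticFunction ℤ)) * ((σ 1 : ArithmeticFunction ℕ) : ArithmeticFunction ℤ)

lemma F_mult : F.IsMultiplicative :=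
  (isMultiplicative_moebius.pmul isMultiplicative_sigma.natCast).mul isMultiplicative_sigma.natCast

lemma F_prime (p : ℕ) (hp : p.Prime) : F p = 0 := by
  rw [F, mul_apply, Nat.sum_divisorsAntidiagonal (f := fun x y => (pmul moebius ((σ 1 : ArithmeticFunction ℕ) : ArithmeticFunction ℤ)) x * ((σ 1 : ArithmeticFunction ℕ) : ArithmeticFunction ℤ) y)]
  rw [hp.divisors, Finset.sum_pair hp.one_lt.ne]
  simp [moebius_apply_prime hp, sigma_one_apply, hp.ne_one, Nat.div_self hp.pos]

lemma key (m : ℕ) (hm : Squarefree m) :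
    ∑ u ∈ m.divisors, (moebius (m / u) * (sigma 1 (m / u) : ℤ) * (sigma 1 u : ℤ)) =
      if m = 1 then 1 else 0 := by
  have hm0 : m ≠ 0 := hm.ne_zero
  have hF : F m = ∑ u ∈ m.divisors, (moebius (m / u) * (sigma 1 (m / u) : ℤ) * (sigma 1 u : ℤ)) := by
    rw [F, mul_apply, Nat.sum_divisorsAntidiagonal' (f := fun x y => (pmul moebius ((σ 1 : ArithmeticFunction ℕ) : ArithmeticFunction ℤ)) x * ((σ 1 : ArithmeticFunction ℕ) : ArithmeticFunction ℤ) y)]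
    simp [pmul_apply]
  rw [← hF]
  split_ifs with h
  · rw [h, F_mult.map_one]
  · rw [F_mult.multiplicative_factorization F hm0]
    obtain ⟨p, hp⟩ := Nat.exists_prime_and_dvd h
    refine Finset.prod_eq_zero (i := p) ?_ ?_
    · simp [Nat.support_factorization, Nat.mem_primeFactors, hp.1, hp.2, hm0]
    · simp only [Nat.factorization_eq_one_of_squarefree hm hp.1 hp.2, pow_one, F_prime p hp.1]

theorem stmt8 (d s : ℕ) (hd : Squarefree d) (hs : 0 < s) (hsd : s ∣ d) :
    ∑ t ∈ d.divisors.filter (fun t => s ∣ t),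
      (moebius (d / t) * (sigma 1 (d / t) : ℤ) * (sigma 1 (t / s) : ℤ)) =
      if s = d then 1 else 0 := by
  have hd0 : d ≠ 0 := hd.ne_zero
  have hm : Squarefree (d / s) := hd.squarefree_of_dvd (Nat.div_dvd_of_dvd hsd)
  have hiff : s = d ↔ d / s = 1 := by
    constructor
    · rintro rfl; exact Nat.div_self hs
    · intro h
      have := Nat.div_mul_cancel hsd
      rw [h, one_mul] at this; exact this
  rw [show (if s = d then (1:ℤ) else 0) = if d / s = 1 then 1 else 0 by simp [hiff],
    ← key (d / s) hm]
  refine Finset.sum_nbij' (fun t => t / s) (fun u => s * u) ?_ ?_ ?_ ?_ ?_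
  · intro t ht
    simp only [Finset.mem_filter, Nat.mem_divisors] at ht
    obtain ⟨⟨htd, _⟩, v, rfl⟩ := ht
    rw [Nat.mul_div_cancel_left v hs]
    refine Nat.mem_divisors.2 ⟨(Nat.dvd_div_iff_mul_dvd hsd).2 htd, ?_⟩
    exact hm.ne_zero
  · intro u hu
    simp only [Nat.mem_divisors] at hu
    exact Finset.mem_filter.2 ⟨Nat.mem_divisors.2 ⟨(Nat.dvd_div_iff_mul_dvd hsd).1 hu.1, hd0⟩, Dvd.intro u rfl⟩
  · intro t ht
    simp only [Finset.mem_filter] at ht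
    exact Nat.mul_div_cancel' ht.2
  · intro u hu
    exact Nat.mul_div_cancel_left u hs
  · intro t ht
    simp only [Finset.mem_filter, Nat.mem_divisors] at ht
    obtain ⟨⟨htd, _⟩, v, rfl⟩ := ht
    simp [Nat.mul_div_cancel_left v hs, Nat.div_div_eq_div_mul]
end
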